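/- Let Ω ∈ (0, π] and let k, m be integers. Then the series Σ_{t∈ℤ} sinc(kπ + Ωt) · sinc(mπ + Ωt) converges, and its sum equals π/Ω if k = m and equals 0 if k ≠ m. -/

import Mathlib

open MeasureTheory Real Set intervalIntegral

/-- `sinc x = sin x / x` for `x ≠ 0`, and `sinc 0 = 1`. -/
noncomputable def sinc (x : ℝ) : ℝ := if x = 0 then 1 else Real.sin x / x

noncomputable def gg (Ω a : ℝ) : ℝ → ℂ :=
  Set.indicator (Set.Icc (-Ω) Ω) (fun x => Complex.exp (a * x * Complex.I))

lemma integral_gg (Ω c : ℝ) (h0 : 0 < Ω) (hπ : Ω ≤ π) :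
    ∫ x in (-π)..π, gg Ω c x = ((2 * Ω * _root_.sinc (c * Ω) : ℝ) : ℂ) := by
  rw [intervalIntegral.integral_of_le (by linarith [pi_pos] : -π ≤ π)]
  simp only [gg]
  rw [setIntegral_indicator measurableSet_Icc]
  have hset : (Icc (-Ω) Ω ∩ Ioc (-π) π : Set ℝ) =ᵐ[volume] Ioc (-Ω) Ω := by
    have h1 : (Icc (-Ω) Ω ∩ Ioc (-π) π : Set ℝ) =ᵐ[volume] (Ioc (-Ω) Ω ∩ Ioc (-π) π : Set ℝ) :=
      Filter.EventuallyEq.inter Ioc_ae_eq_Icc.symm (Filter.EventuallyEq.rfl)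
    have h2 : Ioc (-Ω) Ω ∩ Ioc (-π) π = Ioc (-Ω) Ω := by
      apply Set.inter_eq_left.mpr
      intro x hx
      exact ⟨by linarith [hx.1], by linarith [hx.2]⟩
    rw [h2] at h1; exact h1
  rw [Set.inter_comm, setIntegral_congr_set hset, ← intervalIntegral.integral_of_le (by linarith : -Ω ≤ Ω)]
  by_cases hc : c = 0
  · simp only [hc, Complex.ofReal_zero, zero_mul, Complex.exp_zero, zero_mul,
      intervalIntegral.integral_const, _root_.sinc, if_pos rfl]
    push_cast
    simp
    ring
  · have h1 : ∀ x : ℝ, (c : ℂ) * x * Complex.I = (c * Complex.I) * x := fun x => by ring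
    simp_rw [h1]
    rw [integral_exp_mul_complex (by simp [hc] : (c : ℂ) * Complex.I ≠ 0)]
    have hcΩ : c * Ω ≠ 0 := mul_ne_zero hc h0.ne'
    rw [_root_.sinc, if_neg hcΩ]
    have e1 : (c : ℂ) * Complex.I * Ω = ((c * Ω : ℝ) : ℂ) * Complex.I := by push_cast; ring
    have e2 : (c : ℂ) * Complex.I * (-Ω : ℝ) = ((-(c * Ω) : ℝ) : ℂ) * Complex.I := by push_cast; ring
    rw [e1, e2, Complex.exp_mul_I, Complex.exp_mul_I]
    push_cast
    simp [Real.cos_neg, Real.sin_neg]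
    have hΩc : (Ω:ℂ) ≠ 0 := Complex.ofReal_ne_zero.mpr h0.ne'
    have hcc : (c:ℂ) ≠ 0 := Complex.ofReal_ne_zero.mpr hc
    field_simp
    ring_nf

lemma fourierCoeff_gg (Ω a : ℝ) (h0 : 0 < Ω) (hπ : Ω ≤ π) (n : ℤ) :
    haveI : Fact (0 < 2*π) := ⟨by positivity⟩
    fourierCoeff (AddCircle.liftIoc (2*π) (-π) (gg Ω a)) n
      = (((Ω/π) * _root_.sinc ((a - n) * Ω) : ℝ) : ℂ) := by
  haveI : Fact (0 < 2*π) := ⟨by positivity⟩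
  rw [fourierCoeff_eq_intervalIntegral _ n (-π)]
  have hππ : -π + 2*π = π := by ring
  rw [hππ]
  have heq : (∫ x in (-π)..π, (fourier (-n) (x : AddCircle (2*π)) : ℂ) •
      AddCircle.liftIoc (2*π) (-π) (gg Ω a) ↑x) = ∫ x in (-π)..π, gg Ω (a - n) x := by
    rw [intervalIntegral.integral_of_le (by linarith [pi_pos] : -π ≤ π),
      intervalIntegral.integral_of_le (by linarith [pi_pos] : -π ≤ π)]
    apply setIntegral_congr_fun measurableSet_Ioc
    intro x hx
    dsimp only
    have hx' : x ∈ Ioc (-π) (-π + 2*π) := by rwa [hππ]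
    rw [AddCircle.liftIoc_coe_apply hx']
    rw [fourier_coe_apply]
    simp only [gg, smul_eq_mul]
    by_cases hmem : x ∈ Icc (-Ω) Ω
    · rw [Set.indicator_of_mem hmem, Set.indicator_of_mem hmem, ← Complex.exp_add]
      congr 1
      have h2π : (2*π : ℂ) ≠ 0 := by
        simp [Real.pi_ne_zero]
      field_simp
      push_cast
      ring
    · rw [Set.indicator_of_notMem hmem, Set.indicator_of_notMem hmem, mul_zero]
  rw [heq, integral_gg Ω (a - n) h0 hπ]
  rw [Complex.real_smul]
  push_cast
  have : (π : ℂ) ≠ 0 := Complex.ofReal_ne_zero.mpr Real.pi_ne_zero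
  field_simp

lemma memℒp_gg (Ω a : ℝ) :
    haveI : Fact (0 < 2*π) := ⟨by positivity⟩
    MemLp (AddCircle.liftIoc (2*π) (-π) (gg Ω a)) 2 AddCircle.haarAddCircle := by
  haveI : Fact (0 < 2*π) := ⟨by positivity⟩
  have hm : Measurable (gg Ω a) := by
    apply Measurable.indicator _ measurableSet_Icc
    fun_prop
  have hlift : Measurable (AddCircle.liftIoc (2*π) (-π) (gg Ω a)) := by
    have h2 : AddCircle.liftIoc (2*π) (-π) (gg Ω a) =
        (Set.restrict _ (gg Ω a)) ∘ (AddCircle.measurableEquivIoc (2*π) (-π)) := rfl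
    rw [h2]
    exact (hm.comp measurable_subtype_coe).comp (AddCircle.measurableEquivIoc _ _).measurable
  apply MemLp.of_bound hlift.aestronglyMeasurable 1
  apply Filter.Eventually.of_forall
  intro z
  show ‖gg Ω a _‖ ≤ 1
  rw [gg]
  set x : ℝ := ((AddCircle.equivIoc (2*π) (-π)) z : ℝ)
  by_cases hmem : x ∈ Icc (-Ω) Ω
  · rw [Set.indicator_of_mem hmem]
    rw [Complex.norm_exp]
    simp
  · rw [Set.indicator_of_notMem hmem]
    simp

/-- Orthogonality of the integer-sampled shifted sinc functions:
`∑_{t∈ℤ} sinc(kπ + Ωt) sinc(mπ + Ωt)` converges, with sum `π/Ω` if `k = m`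
and `0` otherwise. -/
theorem sinc_shifted_orthogonality
    (Ω : ℝ) (hΩ : Ω ∈ Set.Ioc 0 Real.pi) (k m : ℤ) :
    Summable (fun t : ℤ =>
      _root_.sinc ((k : ℝ) * Real.pi + Ω * t) * _root_.sinc ((m : ℝ) * Real.pi + Ω * t)) ∧
    ∑' t : ℤ, _root_.sinc ((k : ℝ) * Real.pi + Ω * t) * _root_.sinc ((m : ℝ) * Real.pi + Ω * t) =
      if k = m then Real.pi / Ω else 0 := by
  obtain ⟨h0, hπ⟩ := hΩ
  haveI : Fact (0 < 2*π) := ⟨by positivity⟩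
  have hΩ0 : Ω ≠ 0 := h0.ne'
  have hπ0 : (π : ℝ) ≠ 0 := Real.pi_ne_zero
  set ak : ℝ := k*π/Ω with hak
  set am : ℝ := m*π/Ω with ham
  have hmemk := memℒp_gg Ω ak
  have hmemm := memℒp_gg Ω am
  set Fk := hmemk.toLp _ with hFk
  set Fm := hmemm.toLp _ with hFm
  -- Fourier coefficients of Fk, Fm
  have hrepr : ∀ (a : ℝ) (h : MemLp (AddCircle.liftIoc (2*π) (-π) (gg Ω a)) 2
      AddCircle.haarAddCircle) (i : ℤ),
      fourierBasis.repr (h.toLp _) i = (((Ω/π) * _root_.sinc ((a - i) * Ω) : ℝ) : ℂ) := by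
    intro a h i
    rw [fourierBasis_repr, ← fourierCoeff_gg Ω a h0 hπ i]
    apply MeasureTheory.integral_congr_ae
    filter_upwards [h.coeFn_toLp] with t ht
    rw [ht]
  -- the summand
  set f : ℤ → ℝ := fun t => _root_.sinc ((k : ℝ) * π + Ω * t) * _root_.sinc ((m : ℝ) * π + Ω * t) with hf
  have hterm : ∀ i : ℤ,
      (inner ℂ Fk (fourierBasis (T := 2*π) i) : ℂ) * inner ℂ (fourierBasis (T := 2*π) i) Fm
        = (((Ω/π)^2 * f (-i) : ℝ) : ℂ) := by
    intro i
    have h1 : (inner ℂ (fourierBasis (T := 2*π) i) Fm : ℂ) = fourierBasis.repr Fm i :=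
      (fourierBasis.repr_apply_apply Fm i).symm
    have h2 : (inner ℂ Fk (fourierBasis (T := 2*π) i) : ℂ) =
        (starRingEnd ℂ) (fourierBasis.repr Fk i) := by
      rw [fourierBasis.repr_apply_apply, inner_conj_symm]
    rw [h1, h2, hrepr ak hmemk i, hrepr am hmemm i, Complex.conj_ofReal, ← Complex.ofReal_mul]
    congr 1
    have e1 : (ak - i) * Ω = (k : ℝ) * π + Ω * (-i : ℤ) := by
      rw [hak]; field_simp; push_cast; ring
    have e2 : (am - i) * Ω = (m : ℝ) * π + Ω * (-i : ℤ) := by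
      rw [ham]; field_simp; push_cast; ring
    rw [hf]
    dsimp only
    rw [e1, e2]
    ring
  -- the inner product
  have hinner : (inner ℂ Fk Fm : ℂ) = (((Ω/π) * _root_.sinc (((m : ℝ) - k) * π) : ℝ) : ℂ) := by
    rw [MeasureTheory.L2.inner_def]
    have hptwise : ∀ z : AddCircle (2*π),
        (starRingEnd ℂ) (AddCircle.liftIoc (2*π) (-π) (gg Ω ak) z) *
          (AddCircle.liftIoc (2*π) (-π) (gg Ω am) z)
        = AddCircle.liftIoc (2*π) (-π) (gg Ω (am - ak)) z := by
      intro z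
      show (starRingEnd ℂ) (gg Ω ak _) * gg Ω am _ = gg Ω (am - ak) _
      set x : ℝ := ((AddCircle.equivIoc (2*π) (-π)) z : ℝ)
      rw [gg, gg, gg]
      by_cases hmem : x ∈ Icc (-Ω) Ω
      · rw [Set.indicator_of_mem hmem, Set.indicator_of_mem hmem, Set.indicator_of_mem hmem]
        rw [← Complex.exp_conj, ← Complex.exp_add]
        congr 1
        simp only [map_mul, Complex.conj_ofReal, Complex.conj_I]
        push_cast
        ring
      · rw [Set.indicator_of_notMem hmem, Set.indicator_of_notMem hmem,
          Set.indicator_of_notMem hmem, mul_zero]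
    have hint : ∫ z, (inner ℂ (Fk z) (Fm z) : ℂ) ∂AddCircle.haarAddCircle
        = ∫ z, AddCircle.liftIoc (2*π) (-π) (gg Ω (am - ak)) z ∂AddCircle.haarAddCircle := by
      apply MeasureTheory.integral_congr_ae
      filter_upwards [hmemk.coeFn_toLp, hmemm.coeFn_toLp] with z hzk hzm
      rw [RCLike.inner_apply, hzk, hzm, mul_comm, hptwise]
    rw [hint]
    have h00 : (∫ z, AddCircle.liftIoc (2*π) (-π) (gg Ω (am - ak)) z ∂AddCircle.haarAddCircle)
        = fourierCoeff (AddCircle.liftIoc (2*π) (-π) (gg Ω (am - ak))) 0 := by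
      rw [fourierCoeff]
      simp
    rw [h00, fourierCoeff_gg Ω (am - ak) h0 hπ 0]
    congr 2
    rw [ham, hak]
    push_cast
    field_simp
    ring
  have hsummable := fourierBasis.summable_inner_mul_inner (𝕜 := ℂ) Fk Fm
  have htsum := fourierBasis.tsum_inner_mul_inner (𝕜 := ℂ) Fk Fm
  simp_rw [hterm] at hsummable htsum
  rw [hinner] at htsum
  -- descend to ℝ
  rw [Complex.summable_ofReal] at hsummable
  rw [← Complex.ofReal_tsum, Complex.ofReal_inj] at htsum
  have hc2 : ((Ω/π)^2 : ℝ) ≠ 0 := by positivity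
  have hsumf : Summable (fun i : ℤ => f (-i)) := by
    have := (summable_mul_left_iff hc2).mp hsummable
    exact this
  have hsumf2 : Summable f := by
    have : (fun i : ℤ => f (-i)) = f ∘ (Equiv.neg ℤ) := rfl
    rw [this, Equiv.summable_iff] at hsumf
    exact hsumf
  have htsumf : ∑' i : ℤ, f (-i) = ∑' t : ℤ, f t := by
    exact Equiv.tsum_eq (Equiv.neg ℤ) f
  rw [tsum_mul_left, htsumf] at htsum
  refine ⟨hsumf2, ?_⟩
  have hval : _root_.sinc (((m : ℝ) - k) * π) = if k = m then 1 else 0 := by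
    by_cases hkm : k = m
    · simp [hkm, _root_.sinc]
    · rw [_root_.sinc, if_neg, if_neg hkm]
      · have : ((m : ℝ) - k) * π = ((m - k : ℤ) : ℝ) * π := by push_cast; ring
        rw [this, Real.sin_int_mul_pi, zero_div]
      · apply mul_ne_zero _ hπ0
        intro hcon
        apply hkm
        have : (m : ℝ) = k := by linarith
        exact_mod_cast this.symm
  have hfin : ∑' t : ℤ, f t = (π/Ω) * _root_.sinc (((m : ℝ) - k) * π) := by
    calc ∑' t : ℤ, f t = ((Ω/π)^2)⁻¹ * ((Ω/π)^2 * ∑' t : ℤ, f t) := by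
          field_simp
      _ = ((Ω/π)^2)⁻¹ * ((Ω/π) * _root_.sinc (((m : ℝ) - k) * π)) := by rw [htsum]
      _ = (π/Ω) * _root_.sinc (((m : ℝ) - k) * π) := by
          field_simp
  rw [hfin, hval]
  by_cases hkm : k = m <;> simp [hkm]
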